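/- In the basis setting for the new conventional 3-threshold scheme, let s ∈ F, let a₀, a₁ ∈ K, set a₂ = π(a₁) + s, and let F(w) = a₀ + a₁·w + a₂·w². Then for any pairwise distinct βᵢ, βⱼ, βₖ ∈ K with shares Zᵢ = F(βᵢ), Zⱼ = F(βⱼ), Zₖ = F(βₖ), the secret is recovered as s = π( [ (βⱼ + βₖ + 1)(βₖ + βⱼ)·Zᵢ + (βᵢ + βₖ + 1)(βᵢ + βₖ)·Zⱼ + (βᵢ + βⱼ + 1)(βⱼ + βᵢ)·Zₖ ] / [ (βᵢ + βⱼ)(βᵢ + βₖ)(βⱼ + βₖ) ] ). -/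
import Mathlib


/-- In the basis setting, three ordinary shares at pairwise distinct points
recover the secret `s` via the Lagrange-type reconstruction formula. -/
theorem stmt_4 {F K : Type*} [Field F] [Field K] [Algebra F K] [CharP K 2] [Finite K]
    (π : K →ₗ[F] F) (hπ1 : π 1 = 1)
    (s : F) (a₀ a₁ : K) (a₂ : F) (ha₂ : a₂ = π a₁ + s)
    (Fn : K → K)
    (hFn : ∀ w, Fn w = a₀ + a₁ * w + algebraMap F K a₂ * w ^ 2)
    (βi βj βk : K) (hij : βi ≠ βj) (hik : βi ≠ βk) (hjk : βj ≠ βk)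
    (Zi Zj Zk : K) (hZi : Zi = Fn βi) (hZj : Zj = Fn βj) (hZk : Zk = Fn βk) :
    s = π (((βj + βk + 1) * (βk + βj) * Zi + (βi + βk + 1) * (βi + βk) * Zj +
        (βi + βj + 1) * (βj + βi) * Zk) /
      ((βi + βj) * (βi + βk) * (βj + βk))) := by
  haveI : CharP F 2 := (algebraMap F K).charP (algebraMap F K).injective 2
  have h2 : (2 : K) = 0 := by simpa using (CharP.cast_eq_zero K 2)
  have hij' : βi + βj ≠ 0 := by
    have := sub_ne_zero.mpr hij; rwa [CharTwo.sub_eq_add] at this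
  have hik' : βi + βk ≠ 0 := by
    have := sub_ne_zero.mpr hik; rwa [CharTwo.sub_eq_add] at this
  have hjk' : βj + βk ≠ 0 := by
    have := sub_ne_zero.mpr hjk; rwa [CharTwo.sub_eq_add] at this
  have hD : (βi + βj) * (βi + βk) * (βj + βk) ≠ 0 := by
    exact mul_ne_zero (mul_ne_zero hij' hik') hjk'
  have key : (((βj + βk + 1) * (βk + βj) * Zi + (βi + βk + 1) * (βi + βk) * Zj +
        (βi + βj + 1) * (βj + βi) * Zk) /
      ((βi + βj) * (βi + βk) * (βj + βk))) = a₁ + algebraMap F K a₂ := by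
    subst hZi hZj hZk
    rw [hFn, hFn, hFn, div_eq_iff hD]
    linear_combination (βk*a₀ + βk^2*a₀ + βj*a₀ + βj*βk*a₁ + βj*βk*a₀ + βj^2*a₀
      + βj^2*βk^2*(algebraMap F K a₂) + βi*a₀ + βi*βk*a₁ + βi*βk*a₀ + βi*βj*a₁
      + βi*βj*a₀ - βi*βj*βk*(algebraMap F K a₂) + 2*βi*βj*βk*a₁
      + βi*βj*βk^2*(algebraMap F K a₂) + βi*βj^2*βk*(algebraMap F K a₂)
      + βi^2*a₀ + βi^2*βk^2*(algebraMap F K a₂) + βi^2*βj*βk*(algebraMap F K a₂)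
      + βi^2*βj^2*(algebraMap F K a₂)) * h2
  rw [key]
  have hπ : π (a₁ + algebraMap F K a₂) = π a₁ + a₂ := by
    rw [map_add, Algebra.algebraMap_eq_smul_one, map_smul, hπ1, smul_eq_mul, mul_one]
  rw [hπ, ha₂]
  have h0 : π a₁ + π a₁ = 0 := CharTwo.add_self_eq_zero _
  linear_combination -h0
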